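/- Let m ≥ 1 and a ∈ ℝ. Let P and C be real symmetric m×m matrices such that every eigenvalue of P lies in [λpmin, λpmax] and every eigenvalue of C lies in [λcmin, λcmax] with 0 < λcmin. Let k ≥ 0 satisfy −1 − a + λpmax < k·λcmin and k·λcmax < 1 − a + λpmin. Then every eigenvalue of a·I_m − P + k·C lies in the open interval (−1, 1); in particular a·I_m − P + k·C is Schur stable. -/

import Mathlib

open Matrix

/-- The multiset of complex eigenvalues (roots of the characteristic polynomial over ℂ,
with multiplicity) of a real square matrix. -/
noncomputable def cRoots {n : ℕ} (M : Matrix (Fin n) (Fin n) ℝ) : Multiset ℂ :=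
  (M.map (Complex.ofReal)).charpoly.roots

/-- A real square matrix is Schur stable if all of its complex eigenvalues have
modulus strictly less than 1. -/
def SchurStable {n : ℕ} (M : Matrix (Fin n) (Fin n) ℝ) : Prop :=
  ∀ μ ∈ cRoots M, ‖μ‖ < 1

open Polynomial

lemma rayleigh {m : ℕ} {A : Matrix (Fin m) (Fin m) ℝ} (hA : A.IsHermitian)
    {l u : ℝ} (hev : ∀ i, l ≤ hA.eigenvalues i ∧ hA.eigenvalues i ≤ u)
    (v : Fin m → ℝ) :
    l * (v ⬝ᵥ v) ≤ v ⬝ᵥ (A *ᵥ v) ∧ v ⬝ᵥ (A *ᵥ v) ≤ u * (v ⬝ᵥ v) := by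
  set U : Matrix (Fin m) (Fin m) ℝ := (hA.eigenvectorUnitary : Matrix (Fin m) (Fin m) ℝ) with hU
  have hUmem := hA.eigenvectorUnitary.2
  have hUU : U * star U = 1 := (Matrix.mem_unitaryGroup_iff).mp hUmem
  have hst : star U = Uᵀ := by
    rw [Matrix.star_eq_conjTranspose, conjTranspose_eq_transpose_of_trivial]
  set w : Fin m → ℝ := Uᵀ *ᵥ v with hw
  have hvU : ∀ x : Fin m → ℝ, v ⬝ᵥ (U *ᵥ x) = w ⬝ᵥ x := by
    intro x
    rw [Matrix.dotProduct_mulVec, hw, Matrix.mulVec_transpose]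
  have hkey : v ⬝ᵥ (A *ᵥ v) = w ⬝ᵥ (Matrix.diagonal hA.eigenvalues *ᵥ w) := by
    conv_lhs => rw [hA.spectral_theorem, Unitary.conjStarAlgAut_apply]
    rw [← hU, hst, ← Matrix.mulVec_mulVec, ← Matrix.mulVec_mulVec, hvU, ← hw]
    norm_num [RCLike.ofReal]
  have hv' : U *ᵥ w = v := by rw [hw, Matrix.mulVec_mulVec, ← hst, hUU, Matrix.one_mulVec]
  have hnorm : v ⬝ᵥ v = w ⬝ᵥ w := by
    calc v ⬝ᵥ v = v ⬝ᵥ (U *ᵥ w) := by rw [hv']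
    _ = w ⬝ᵥ w := hvU w
  have hdiag : w ⬝ᵥ (Matrix.diagonal hA.eigenvalues *ᵥ w) = ∑ i, hA.eigenvalues i * (w i * w i) := by
    simp only [dotProduct, Matrix.mulVec_diagonal]
    exact Finset.sum_congr rfl fun i _ => by ring
  have hww : w ⬝ᵥ w = ∑ i, w i * w i := rfl
  constructor
  · rw [hkey, hnorm, hdiag, hww, Finset.mul_sum]
    exact Finset.sum_le_sum fun i _ => mul_le_mul_of_nonneg_right (hev i).1 (mul_self_nonneg _)
  · rw [hkey, hnorm, hdiag, hww, Finset.mul_sum]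
    exact Finset.sum_le_sum fun i _ => mul_le_mul_of_nonneg_right (hev i).2 (mul_self_nonneg _)

lemma charpoly_conj_unitary {m : ℕ} (U B : Matrix (Fin m) (Fin m) ℝ)
    (hU : U ∈ Matrix.unitaryGroup (Fin m) ℝ) :
    (U * B * star U).charpoly = B.charpoly := by
  have hUU : U * star U = 1 := (Matrix.mem_unitaryGroup_iff).mp hU
  set f : Matrix (Fin m) (Fin m) ℝ →+* Matrix (Fin m) (Fin m) ℝ[X] :=
    (Polynomial.C : ℝ →+* ℝ[X]).mapMatrix with hf
  have hcm : charmatrix (U * B * star U) = f U * charmatrix B * f (star U) := by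
    rw [charmatrix, charmatrix, mul_sub, sub_mul]
    congr 1
    · rw [← (Matrix.scalar_commute (X : ℝ[X]) (fun r => Commute.all _ _) (f U)).eq, mul_assoc,
        ← _root_.map_mul f, hUU, _root_.map_one, mul_one]
    · rw [← _root_.map_mul f, ← _root_.map_mul f]
  have hone : (f U).det * (f (star U)).det = 1 := by
    rw [← det_mul, ← _root_.map_mul f, hUU, _root_.map_one, det_one]
  rw [Matrix.charpoly, Matrix.charpoly, hcm, det_mul, det_mul, mul_right_comm, hone, one_mul]

lemma charpoly_hermitian_real {m : ℕ} {A : Matrix (Fin m) (Fin m) ℝ} (hA : A.IsHermitian) :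
    A.charpoly = ∏ i, (X - Polynomial.C (hA.eigenvalues i)) := by
  have h := hA.spectral_theorem
  have hd : Matrix.diagonal (RCLike.ofReal ∘ hA.eigenvalues) = Matrix.diagonal hA.eigenvalues := by
    norm_num [RCLike.ofReal]
  rw [congrArg Matrix.charpoly h, Unitary.conjStarAlgAut_apply, hd, charpoly_conj_unitary _ _ hA.eigenvectorUnitary.2,
    Matrix.charpoly_of_upperTriangular _ (Matrix.blockTriangular_diagonal _)]
  simp


theorem stmt_12 (m : ℕ) (hm : 1 ≤ m) (a : ℝ)
    (P C : Matrix (Fin m) (Fin m) ℝ)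
    (hP : P.IsHermitian) (hC : C.IsHermitian)
    (lpmin lpmax lcmin lcmax : ℝ) (hlc : 0 < lcmin)
    (hPev : ∀ i, lpmin ≤ hP.eigenvalues i ∧ hP.eigenvalues i ≤ lpmax)
    (hCev : ∀ i, lcmin ≤ hC.eigenvalues i ∧ hC.eigenvalues i ≤ lcmax)
    (k : ℝ) (hk : 0 ≤ k)
    (h1 : -1 - a + lpmax < k * lcmin) (h2 : k * lcmax < 1 - a + lpmin) :
    (∀ (hM : (a • (1 : Matrix (Fin m) (Fin m) ℝ) - P + k • C).IsHermitian) (i : Fin m),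
        -1 < hM.eigenvalues i ∧ hM.eigenvalues i < 1) ∧
    SchurStable (a • (1 : Matrix (Fin m) (Fin m) ℝ) - P + k • C) := by
  set M : Matrix (Fin m) (Fin m) ℝ := a • (1 : Matrix (Fin m) (Fin m) ℝ) - P + k • C with hMdef
  have hsmul : ∀ (c : ℝ) {A : Matrix (Fin m) (Fin m) ℝ}, A.IsHermitian → (c • A).IsHermitian :=
    fun c A hA => by rw [Matrix.IsHermitian, Matrix.conjTranspose_smul, star_trivial, hA.eq]
  have hM0 : M.IsHermitian := ((hsmul a Matrix.isHermitian_one).sub hP).add (hsmul k hC)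
  have part1 : ∀ (hM : M.IsHermitian) (i : Fin m),
      -1 < hM.eigenvalues i ∧ hM.eigenvalues i < 1 := by
    intro hM i
    set v : Fin m → ℝ := ⇑(hM.eigenvectorBasis i) with hv
    have hvec : M *ᵥ v = hM.eigenvalues i • v := hM.mulVec_eigenvectorBasis i
    have hs : v ⬝ᵥ v = 1 := by
      have h1' : ‖hM.eigenvectorBasis i‖ = 1 := hM.eigenvectorBasis.orthonormal.1 i
      have h2' : (inner ℝ (hM.eigenvectorBasis i) (hM.eigenvectorBasis i) : ℝ) = 1 := by
        rw [real_inner_self_eq_norm_sq, h1']; norm_num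
      rw [PiLp.inner_apply] at h2'
      simpa [dotProduct, RCLike.inner_apply, hv, ← pow_two] using h2'
    have hray : v ⬝ᵥ (M *ᵥ v) = hM.eigenvalues i := by
      rw [hvec, dotProduct_smul, hs]; simp
    have hexp : v ⬝ᵥ (M *ᵥ v) =
        a * (v ⬝ᵥ v) - v ⬝ᵥ (P *ᵥ v) + k * (v ⬝ᵥ (C *ᵥ v)) := by
      rw [hMdef, Matrix.add_mulVec, Matrix.sub_mulVec, Matrix.smul_mulVec,
        Matrix.smul_mulVec, Matrix.one_mulVec, dotProduct_add,
        dotProduct_sub, dotProduct_smul, dotProduct_smul]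
      simp [smul_eq_mul]
    have hrp := rayleigh hP hPev v
    have hrc := rayleigh hC hCev v
    simp only [hs, mul_one] at hrp hrc
    have hc1 : k * lcmin ≤ k * (v ⬝ᵥ (C *ᵥ v)) := mul_le_mul_of_nonneg_left hrc.1 hk
    have hc2 : k * (v ⬝ᵥ (C *ᵥ v)) ≤ k * lcmax := mul_le_mul_of_nonneg_left hrc.2 hk
    have heig : hM.eigenvalues i = a - v ⬝ᵥ (P *ᵥ v) + k * (v ⬝ᵥ (C *ᵥ v)) := by
      rw [← hray, hexp, hs, mul_one]
    constructor <;> rw [heig] <;> [linarith [hrp.2]; linarith [hrp.1]]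
  refine ⟨part1, ?_⟩
  intro μ hμ
  have hch : M.charpoly = ∏ i, (X - Polynomial.C (hM0.eigenvalues i)) :=
    charpoly_hermitian_real hM0
  have hmap : (M.map Complex.ofReal).charpoly
      = ∏ i, (X - Polynomial.C ((hM0.eigenvalues i : ℂ))) := by
    rw [show M.map Complex.ofReal = M.map ⇑Complex.ofRealHom from rfl,
      Matrix.charpoly_map, hch, Polynomial.map_prod]
    simp
  have hroots : (M.map Complex.ofReal).charpoly.roots
      = Finset.univ.val.map (fun i => (hM0.eigenvalues i : ℂ)) := by
    have hmm : Multiset.map (fun i => X - Polynomial.C ((hM0.eigenvalues i : ℂ))) Finset.univ.val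
        = Multiset.map (fun a => X - Polynomial.C a)
          (Multiset.map (fun i => ((hM0.eigenvalues i : ℂ))) Finset.univ.val) := by
      rw [Multiset.map_map]; rfl
    rw [hmap, Finset.prod_eq_multiset_prod, hmm, Polynomial.roots_multiset_prod_X_sub_C]
  rw [cRoots, hroots] at hμ
  obtain ⟨i, _, rfl⟩ := Multiset.mem_map.mp hμ
  rw [Complex.norm_real, Real.norm_eq_abs]
  exact abs_lt.mpr (part1 hM0 i)
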